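/- Let $h: I \to \mathscr{D}$ be a smooth curve and define $\tau(M)(t) = h(t) M(t)^* h(t)^{-1}$ for matrix-valued functions $M$ along $h$. Let $d_A M = \dot M - \frac{1}{2}[\dot h h^{-1}, M]$. Then $d_A(\tau(M)) = \tau(d_A M)$ for all $M$; i.e. the real structure $\tau$ is parallel with respect to the connection $d_A$. -/
import Mathlib


open Matrix

attribute [local instance] Matrix.frobeniusNormedAddCommGroup Matrix.frobeniusNormedRing
  Matrix.frobeniusNormedSpace

attribute [local instance] Matrix.frobeniusNormedAlgebra

set_option maxHeartbeats 1600000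

/-- Along a smooth curve `h` in the matrix model of `ℍ³`, the real structure
`τ(M) = h Mᴴ h⁻¹` is parallel for the connection `d_A M = Ṁ - ½ [ḣ h⁻¹, M]`:
`d_A (τ M) = τ (d_A M)`. -/
theorem stmt_5 (h M : ℝ → Matrix (Fin 2) (Fin 2) ℂ) (t : ℝ)
    (hherm : ∀ s, (h s)ᴴ = h s) (htr : ∀ s, (M s).trace = 0)
    (hinv : ∀ s, IsUnit (h s))
    (hdh : Differentiable ℝ h) (hdM : Differentiable ℝ M)
    (hdinv : Differentiable ℝ fun s => (h s)⁻¹) :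
    deriv (fun s => h s * (M s)ᴴ * (h s)⁻¹) t
        - (2 : ℂ)⁻¹ • ⁅deriv h t * (h t)⁻¹, h t * (M t)ᴴ * (h t)⁻¹⁆
      = h t * (deriv M t - (2 : ℂ)⁻¹ • ⁅deriv h t * (h t)⁻¹, M t⁆)ᴴ * (h t)⁻¹ := by
  have hdet : ∀ s, IsUnit (h s).det := fun s => (Matrix.isUnit_iff_isUnit_det _).mp (hinv s)
  have hmulr : ∀ s, h s * (h s)⁻¹ = 1 := fun s => Matrix.mul_nonsing_inv _ (hdet s)
  have hmull : ∀ s, (h s)⁻¹ * h s = 1 := fun s => Matrix.nonsing_inv_mul _ (hdet s)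
  -- derivative of conjTranspose
  have hstarD : ∀ (f : ℝ → Matrix (Fin 2) (Fin 2) ℂ), Differentiable ℝ f →
      ∀ u, HasDerivAt (fun s => (f s)ᴴ) (deriv f u)ᴴ u := by
    intro f hf u
    simp only [← Matrix.star_eq_conjTranspose]
    exact (hf u).hasDerivAt.star
  have hdMH : Differentiable ℝ fun s => (M s)ᴴ := fun u => ((hstarD M hdM u).differentiableAt)
  -- deriv h t is hermitian
  have hH' : (deriv h t)ᴴ = deriv h t := by
    have h1 : HasDerivAt (fun s => (h s)ᴴ) (deriv h t)ᴴ t := hstarD h hdh t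
    have h2 : (fun s => (h s)ᴴ) = h := funext hherm
    rw [h2] at h1
    exact h1.deriv.symm
  have hHi : ((h t)⁻¹)ᴴ = (h t)⁻¹ := by
    rw [Matrix.conjTranspose_nonsing_inv, hherm]
  -- deriv of inverse
  have hinvD : deriv (fun s => (h s)⁻¹) t = -((h t)⁻¹ * deriv h t * (h t)⁻¹) := by
    have hone : HasDerivAt (fun s => h s * (h s)⁻¹) 0 t := by
      have : (fun s => h s * (h s)⁻¹) = fun _ => (1 : Matrix (Fin 2) (Fin 2) ℂ) :=
        funext hmulr
      rw [this]; exact hasDerivAt_const _ _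
    have hprod : HasDerivAt (fun s => h s * (h s)⁻¹)
        (deriv h t * (h t)⁻¹ + h t * deriv (fun s => (h s)⁻¹) t) t :=
      ((hdh t).hasDerivAt.mul (hdinv t).hasDerivAt)
    have heq := (hone.unique hprod).symm
    have : h t * deriv (fun s => (h s)⁻¹) t = -(deriv h t * (h t)⁻¹) := by
      rw [add_comm] at heq; exact eq_neg_of_add_eq_zero_left heq
    calc deriv (fun s => (h s)⁻¹) t
        = (h t)⁻¹ * (h t * deriv (fun s => (h s)⁻¹) t) := by
          rw [← Matrix.mul_assoc, hmull, Matrix.one_mul]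
      _ = -((h t)⁻¹ * deriv h t * (h t)⁻¹) := by rw [this]; noncomm_ring
  -- deriv of the product
  have hprod3 : deriv (fun s => h s * (M s)ᴴ * (h s)⁻¹) t
      = (deriv h t * (M t)ᴴ + h t * (deriv M t)ᴴ) * (h t)⁻¹
        + h t * (M t)ᴴ * deriv (fun s => (h s)⁻¹) t := by
    exact ((((hdh t).hasDerivAt.mul (hstarD M hdM t)).mul (hdinv t).hasDerivAt)).deriv
  rw [hprod3, hinvD]
  -- now pure algebra
  set H := h t
  set Hi := (h t)⁻¹
  set H' := deriv h t
  set Mt := (M t)ᴴ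
  set M' := (deriv M t)ᴴ
  have key : Hi * H = 1 := hmull t
  simp only [Ring.lie_def, conjTranspose_sub, conjTranspose_smul, conjTranspose_mul,
    Matrix.conjTranspose_sub, hH', hHi, starRingEnd_apply]
  have hstar2 : star ((2:ℂ)⁻¹) = (2:ℂ)⁻¹ := by norm_num
  rw [hstar2]
  have hc : ∀ X : Matrix (Fin 2) (Fin 2) ℂ, Hi * (H * X) = X := by
    intro X; rw [← Matrix.mul_assoc, key, Matrix.one_mul]
  have hc' : ∀ X : Matrix (Fin 2) (Fin 2) ℂ, H * (Hi * X) = X := by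
    intro X; rw [← Matrix.mul_assoc, hmulr t, Matrix.one_mul]
  simp only [Matrix.mul_sub, Matrix.sub_mul, Matrix.mul_assoc, smul_sub, Matrix.mul_smul,
    Matrix.smul_mul, hc, hc', Matrix.add_mul, Matrix.mul_neg]
  module
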